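/- Abstract boundary lemma: let V, g : [0,1]² → ℝ be continuous with V ≤ g, suppose g(π₁,π₂) = φ(π₁) + π₂ on a region T = {(π₁,π₂) : 0 ≤ π₂ ≤ ψ(π₁)}, suppose V is Lipschitz with constant 1 in π₂, and suppose V(π₁,0) = g(π₁,0) for all π₁. Then there exists an upper semicontinuous function b : [0,1] → [0,∞) with b(π₁) ≤ ψ(π₁) such that {π ∈ T : V(π) = g(π)} = {π ∈ T : π₂ ≤ b(π₁)}. -/
import Mathlib


open Set

/-- abstract boundary lemma: V, g continuous on [0,1]² with V ≤ g,
g(π₁,π₂) = φ(π₁) + π₂ on T = {0 ≤ π₂ ≤ ψ(π₁)}, V Lipschitz(1) in π₂, and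
V(π₁,0) = g(π₁,0). Then there is an upper semicontinuous b with 0 ≤ b ≤ ψ such that
{π ∈ T : V(π) = g(π)} = {π ∈ T : π₂ ≤ b(π₁)}. -/
theorem stmt15 (V g : ℝ × ℝ → ℝ) (φ ψ : ℝ → ℝ)
    (hφc : ContinuousOn φ (Set.Icc (0:ℝ) 1)) (hψc : ContinuousOn ψ (Set.Icc (0:ℝ) 1))
    (hφ0 : ∀ x ∈ Set.Icc (0:ℝ) 1, 0 ≤ φ x)
    (hψ : ∀ x ∈ Set.Icc (0:ℝ) 1, ψ x ∈ Set.Icc (0:ℝ) 1)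
    (T : Set (ℝ × ℝ))
    (hT : T = {p : ℝ × ℝ | p.1 ∈ Set.Icc (0:ℝ) 1 ∧ 0 ≤ p.2 ∧ p.2 ≤ ψ p.1})
    (hVcont : ContinuousOn V (Set.Icc ((0:ℝ), (0:ℝ)) (1, 1)))
    (hgcont : ContinuousOn g (Set.Icc ((0:ℝ), (0:ℝ)) (1, 1)))
    (hVle : ∀ p ∈ Set.Icc ((0:ℝ), (0:ℝ)) (1, 1), V p ≤ g p)
    (hgT : ∀ p ∈ T, g p = φ p.1 + p.2)
    (hLip : ∀ x ∈ Set.Icc (0:ℝ) 1, ∀ y ∈ Set.Icc (0:ℝ) 1, ∀ y' ∈ Set.Icc (0:ℝ) 1,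
      |V (x, y) - V (x, y')| ≤ |y - y'|)
    (hzero : ∀ x ∈ Set.Icc (0:ℝ) 1, V (x, 0) = g (x, 0)) :
    ∃ b : ℝ → ℝ,
      (∀ x ∈ Set.Icc (0:ℝ) 1, 0 ≤ b x ∧ b x ≤ ψ x) ∧
      UpperSemicontinuousOn b (Set.Icc (0:ℝ) 1) ∧
      (∀ p ∈ T, (V p = g p ↔ p.2 ≤ b p.1)) := by
  set A : Set (ℝ × ℝ) := Set.Icc ((0:ℝ), (0:ℝ)) (1, 1) with hAdef
  have hmemA : ∀ p : ℝ × ℝ, p ∈ A ↔ (p.1 ∈ Set.Icc (0:ℝ) 1 ∧ p.2 ∈ Set.Icc (0:ℝ) 1) := by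
    intro p
    simp [hAdef, Set.mem_Icc, Prod.le_def, and_assoc, and_left_comm]
  -- T ⊆ A
  have hTA : T ⊆ A := by
    intro p hp
    rw [hT] at hp
    rw [hmemA]
    exact ⟨hp.1, hp.2.1, hp.2.2.trans (hψ p.1 hp.1).2⟩
  -- the contact set K
  set K : Set (ℝ × ℝ) := {p | p ∈ A ∧ p.2 ≤ ψ p.1 ∧ V p = g p} with hKdef
  have hKT : K ⊆ T := by
    intro p hp
    obtain ⟨hpA, h1, h2⟩ := hp
    rw [hmemA] at hpA
    rw [hT]
    exact ⟨hpA.1, hpA.2.1, h1⟩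
  -- compactness of K
  have hψA : ContinuousOn (fun p : ℝ × ℝ => ψ p.1) A := by
    apply hψc.comp continuousOn_fst
    intro p hp; exact ((hmemA p).mp hp).1
  have hKcomp : IsCompact K := by
    haveI : CompactSpace A := isCompact_iff_compactSpace.mp isCompact_Icc
    have hK' : IsClosed {q : A | (q:ℝ×ℝ).2 ≤ ψ (q:ℝ×ℝ).1 ∧ V q = g q} := by
      apply IsClosed.inter
      · exact isClosed_le (continuous_snd.comp continuous_subtype_val)
          (continuousOn_iff_continuous_restrict.mp hψA)
      · exact isClosed_eq (continuousOn_iff_continuous_restrict.mp hVcont)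
          (continuousOn_iff_continuous_restrict.mp hgcont)
    have : K = Subtype.val '' {q : A | (q:ℝ×ℝ).2 ≤ ψ (q:ℝ×ℝ).1 ∧ V q = g q} := by
      ext p
      constructor
      · rintro ⟨hpA, h1, h2⟩; exact ⟨⟨p, hpA⟩, ⟨h1, h2⟩, rfl⟩
      · rintro ⟨⟨q, hq⟩, hmem, rfl⟩; exact ⟨hq, hmem.1, hmem.2⟩
    rw [this]
    exact (hK'.isCompact).image continuous_subtype_val
  -- sections
  set S : ℝ → Set ℝ := fun x => {y | (x, y) ∈ K} with hSdef
  have hS0 : ∀ x ∈ Set.Icc (0:ℝ) 1, (0:ℝ) ∈ S x := by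
    intro x hx
    refine ⟨(hmemA _).mpr ⟨hx, by norm_num⟩, (hψ x hx).1, hzero x hx⟩
  have hSbdd : ∀ x, BddAbove (S x) := by
    intro x
    refine ⟨1, fun y hy => ?_⟩
    exact (((hmemA _).mp hy.1).2).2
  -- downward closure
  have hdown : ∀ x ∈ Set.Icc (0:ℝ) 1, ∀ y ∈ S x, ∀ y', 0 ≤ y' → y' ≤ y → y' ∈ S x := by
    intro x hx y hy y' hy'0 hy'y
    obtain ⟨hyA, hyψ, hyVg⟩ := hy
    have hy01 : y ∈ Set.Icc (0:ℝ) 1 := ((hmemA _).mp hyA).2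
    have hy'01 : y' ∈ Set.Icc (0:ℝ) 1 := ⟨hy'0, hy'y.trans hy01.2⟩
    have hy'A : (x, y') ∈ A := (hmemA _).mpr ⟨hx, hy'01⟩
    have hy'ψ : y' ≤ ψ x := hy'y.trans hyψ
    refine ⟨hy'A, hy'ψ, ?_⟩
    have hT1 : (x, y) ∈ T := hKT ⟨hyA, hyψ, hyVg⟩
    have hT2 : (x, y') ∈ T := by
      rw [hT]; exact ⟨hx, hy'0, hy'ψ⟩
    have hg1 : g (x, y) = φ x + y := hgT _ hT1
    have hg2 : g (x, y') = φ x + y' := hgT _ hT2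
    have hlip := hLip x hx y hy01 y' hy'01
    have hlow : V (x, y) - V (x, y') ≤ y - y' := by
      calc V (x, y) - V (x, y') ≤ |V (x, y) - V (x, y')| := le_abs_self _
        _ ≤ |y - y'| := hlip
        _ = y - y' := abs_of_nonneg (by linarith)
    have hVle' := hVle (x, y') hy'A
    have : φ x + y' ≤ V (x, y') := by
      have : g (x, y) = V (x, y) := hyVg.symm
      linarith [hg1, hlow]
    linarith [hg2]
  -- b
  set b : ℝ → ℝ := fun x => sSup (S x) with hbdef
  have hbmem : ∀ x ∈ Set.Icc (0:ℝ) 1, b x ∈ S x := by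
    intro x hx
    have hScl : IsClosed (S x) := by
      have : S x = (fun y => (x, y)) ⁻¹' K := rfl
      rw [this]
      exact hKcomp.isClosed.preimage (Continuous.prodMk_right x)
    exact hScl.csSup_mem ⟨0, hS0 x hx⟩ (hSbdd x)
  have hb0 : ∀ x ∈ Set.Icc (0:ℝ) 1, 0 ≤ b x := fun x hx =>
    le_csSup (hSbdd x) (hS0 x hx)
  have hbψ : ∀ x ∈ Set.Icc (0:ℝ) 1, b x ≤ ψ x := fun x hx =>
    csSup_le ⟨0, hS0 x hx⟩ (fun y hy => hy.2.1)
  refine ⟨b, fun x hx => ⟨hb0 x hx, hbψ x hx⟩, ?_, ?_⟩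
  · -- upper semicontinuity
    intro x hx c hc
    set Kc : Set (ℝ × ℝ) := K ∩ {p | c ≤ p.2} with hKcdef
    have hKcc : IsCompact Kc :=
      hKcomp.inter_right (isClosed_le continuous_const continuous_snd)
    have hclosed : IsClosed (Prod.fst '' Kc) :=
      (hKcc.image continuous_fst).isClosed
    have hxnot : x ∉ Prod.fst '' Kc := by
      rintro ⟨⟨x', y⟩, ⟨hK, hcy⟩, rfl⟩
      have : y ≤ b x' := le_csSup (hSbdd x') hK
      exact absurd hc (not_lt.mpr (le_trans hcy this))
    have hopen : (Prod.fst '' Kc)ᶜ ∈ nhds x := hclosed.isOpen_compl.mem_nhds hxnot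
    filter_upwards [nhdsWithin_le_nhds hopen, self_mem_nhdsWithin] with x' hx' hx'I
    by_contra hcon
    push_neg at hcon
    have hbx' : b x' ∈ S x' := hbmem x' hx'I
    exact hx' ⟨(x', b x'), ⟨hbx', hcon⟩, rfl⟩
  · -- characterization
    intro p hp
    have hp' := hp
    rw [hT] at hp'
    obtain ⟨hp1, hp20, hp2ψ⟩ := hp'
    constructor
    · intro hVg
      exact le_csSup (hSbdd p.1) ⟨hTA hp, hp2ψ, by rw [Prod.mk.eta]; exact hVg⟩
    · intro hle
      have : p.2 ∈ S p.1 := hdown p.1 hp1 (b p.1) (hbmem p.1 hp1) p.2 hp20 hle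
      have h := this.2.2
      rwa [Prod.mk.eta] at h
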